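/- arXiv:1808.06285 — 2 statements merged into one kernel-verified Lean document; each statement's English description precedes it below -/
import Mathlib

section
/- Let $q$ and $X$ be indeterminates (or elements of a field with $q \neq 0$, $qX \neq 1$), and let $m, n$ be nonnegative integers. Define $I_1(m,n) = q^{-2m-2n}\big(X^c + (1-q^{-1}) \sum_{i=1}^{m} X^{c+i} q^{i}\big)$ and $I_2(m,n) = q^{-2m-2n}(1-q^{-1}) \sum_{i=1}^{n} X^{c+i}(q^{i}-1) + q^{-2m-2n}(1-q^{-1}) \sum_{i=1}^{n} X^{c+i} - q^{-2m-2n}(1-q^{-1})^2 \sum_{i=1}^{m} \sum_{j=1}^{n} q^{i+j}\big( (1-q^{-1}) \sum_{l=1}^{i+j-1} X^{c+l} + q^{-1} X^{c+i+j-1}\big) + q^{-2m-2n}(1-q^{-1}) \sum_{i=1}^{m} q^{i+n}\big( (1-q^{-1}) \sum_{l=1}^{i+n} X^{c+l} + q^{-1} X^{c+i+n}\big) + q^{-2m-2n}(1-q^{-1}) \sum_{i=1}^{n} q^{i+m}\big( (1-q^{-1}) \sum_{l=1}^{i+m} X^{c+l} + q^{-1} X^{c+i+m}\big) - q^{-m-n}\big(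 (1-q^{-1}) \sum_{l=1}^{m+n+1} X^{c+l} + q^{-1} X^{c+m+n+1}\big)$, where $c$ is a fixed nonnegative integer. Then $I_1(m,n) + I_2(m,n) = q^{-2m-2n} \cdot \frac{1 - (qX)^{m+n+1}}{1 - qX} \cdot X^{c}(1 - X)$. -/
open Finset

/-- The term `I₁(m,n)` in the ramified Whittaker function computation. -/
noncomputable def I1 {K : Type*} [Field K] (q X : K) (c m n : ℕ) : K :=
  q⁻¹ ^ (2 * m + 2 * n) * (X ^ c + (1 - q⁻¹) * ∑ i ∈ Icc 1 m, X ^ (c + i) * q ^ i)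

/-- The term `I₂(m,n)` in the ramified Whittaker function computation. -/
noncomputable def I2 {K : Type*} [Field K] (q X : K) (c m n : ℕ) : K :=
  q⁻¹ ^ (2 * m + 2 * n) * (1 - q⁻¹) * ∑ i ∈ Icc 1 n, X ^ (c + i) * (q ^ i - 1)
  + q⁻¹ ^ (2 * m + 2 * n) * (1 - q⁻¹) * ∑ i ∈ Icc 1 n, X ^ (c + i)
  - q⁻¹ ^ (2 * m + 2 * n) * (1 - q⁻¹) ^ 2 *
      ∑ i ∈ Icc 1 m, ∑ j ∈ Icc 1 n, q ^ (i + j) *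
        ((1 - q⁻¹) * (∑ l ∈ Icc 1 (i + j - 1), X ^ (c + l)) + q⁻¹ * X ^ (c + i + j - 1))
  + q⁻¹ ^ (2 * m + 2 * n) * (1 - q⁻¹) *
      ∑ i ∈ Icc 1 m, q ^ (i + n) *
        ((1 - q⁻¹) * (∑ l ∈ Icc 1 (i + n), X ^ (c + l)) + q⁻¹ * X ^ (c + i + n))
  + q⁻¹ ^ (2 * m + 2 * n) * (1 - q⁻¹) *
      ∑ i ∈ Icc 1 n, q ^ (i + m) *
        ((1 - q⁻¹) * (∑ l ∈ Icc 1 (i + m), X ^ (c + l)) + q⁻¹ * X ^ (c + i + m))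
  - q⁻¹ ^ (m + n) *
      ((1 - q⁻¹) * (∑ l ∈ Icc 1 (m + n + 1), X ^ (c + l)) + q⁻¹ * X ^ (c + m + n + 1))

section WhittakerAux

variable {K : Type*} [CommRing K]

/-- The bracket `B(N) = (1-u) ∑_{l=1}^N X^{c+l} + u X^{c+N}` with `u` standing for `q⁻¹`. -/
def WB (u X : K) (c N : ℕ) : K :=
  (1 - u) * (∑ l ∈ Icc 1 N, X ^ (c + l)) + u * X ^ (c + N)

/-- The quantity `q^{2m+2n}·(I₁ + I₂)` written with a formal inverse `u` of `q`. -/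
def WL (q u X : K) (c m n : ℕ) : K :=
  X ^ c + (1 - u) * ∑ i ∈ Icc 1 m, X ^ (c + i) * q ^ i
  + (1 - u) * ∑ i ∈ Icc 1 n, X ^ (c + i) * (q ^ i - 1)
  + (1 - u) * ∑ i ∈ Icc 1 n, X ^ (c + i)
  - (1 - u) ^ 2 * ∑ i ∈ Icc 1 m, ∑ j ∈ Icc 1 n, q ^ (i + j) * WB u X c (i + j - 1)
  + (1 - u) * ∑ i ∈ Icc 1 m, q ^ (i + n) * WB u X c (i + n)
  + (1 - u) * ∑ i ∈ Icc 1 n, q ^ (i + m) * WB u X c (i + m)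
  - q ^ (m + n) * WB u X c (m + n + 1)

lemma WB_succ (u X : K) (c N : ℕ) :
    WB u X c (N + 1) = WB u X c N + X ^ (c + N + 1) - u * X ^ (c + N) := by
  unfold WB
  rw [Finset.sum_Icc_succ_top (by omega : 1 ≤ N + 1)]
  ring

lemma T6step (q u X : K) (huq : q * u = 1) (c n m : ℕ) :
    ∑ i ∈ Icc 1 m, q ^ (i + (n + 1)) * WB u X c (i + (n + 1))
      = q * ∑ i ∈ Icc 1 m, q ^ (i + n) * WB u X c (i + n)
        + q ^ (m + n + 1) * X ^ (c + m + n + 1) - q ^ (n + 1) * X ^ (c + n + 1) := by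
  induction m with
  | zero =>
      simp [Finset.Icc_eq_empty (show ¬(1:ℕ) ≤ 0 by omega)]
  | succ m ih =>
      rw [Finset.sum_Icc_succ_top (by omega : 1 ≤ m + 1),
          Finset.sum_Icc_succ_top (by omega : 1 ≤ m + 1), ih,
          show m + 1 + (n + 1) = (m + 1 + n) + 1 from by omega,
          WB_succ u X c (m + 1 + n)]
      linear_combination (-(q ^ (m + n + 1) * X ^ (c + m + n + 1))) * huq

lemma WL_step (q u X : K) (huq : q * u = 1) (c m n : ℕ) :
    WL q u X c m (n + 1)
      = WL q u X c m n + (q * X) ^ (m + n + 1) * (X ^ c * (1 - X)) := by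
  have hD : (∑ i ∈ Icc 1 m, ∑ j ∈ Icc 1 (n + 1), q ^ (i + j) * WB u X c (i + j - 1))
      = (∑ i ∈ Icc 1 m, ∑ j ∈ Icc 1 n, q ^ (i + j) * WB u X c (i + j - 1))
        + q * ∑ i ∈ Icc 1 m, q ^ (i + n) * WB u X c (i + n) := by
    rw [Finset.mul_sum, ← Finset.sum_add_distrib]
    refine Finset.sum_congr rfl fun i _ => ?_
    rw [Finset.sum_Icc_succ_top (by omega : 1 ≤ n + 1),
        show i + (n + 1) - 1 = i + n from by omega,
        show i + (n + 1) = (i + n) + 1 from by omega, pow_succ]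
    ring
  simp only [WL]
  rw [Finset.sum_Icc_succ_top (by omega : 1 ≤ n + 1),
      Finset.sum_Icc_succ_top (by omega : 1 ≤ n + 1),
      Finset.sum_Icc_succ_top (by omega : 1 ≤ n + 1),
      hD, T6step q u X huq c n m,
      WB_succ u X c (m + (n + 1)),
      show m + (n + 1) = m + n + 1 from by omega,
      show n + 1 + m = m + n + 1 from by omega]
  linear_combination ((1 - u) * (∑ i ∈ Icc 1 m, q ^ (i + n) * WB u X c (i + n))
      - q ^ (m + n) * WB u X c (m + n + 1)) * huq

lemma WL_base (q u X : K) (huq : q * u = 1) (c : ℕ) : ∀ m : ℕ,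
    WL q u X c m 0 = (∑ k ∈ range (m + 1), (q * X) ^ k) * (X ^ c * (1 - X)) := by
  intro m
  induction m with
  | zero =>
      simp [WL, WB, Finset.Icc_eq_empty (show ¬(1:ℕ) ≤ 0 by omega), Finset.Icc_self]
      ring
  | succ m ih =>
      have key : WL q u X c (m + 1) 0
          = WL q u X c m 0 + (q * X) ^ (m + 1) * (X ^ c * (1 - X)) := by
        simp only [WL, Finset.Icc_eq_empty (show ¬(1:ℕ) ≤ 0 by omega),
          Finset.sum_empty, Finset.sum_const_zero, Nat.add_zero, mul_zero,
          add_zero, sub_zero]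
        rw [Finset.sum_Icc_succ_top (by omega : 1 ≤ m + 1),
            Finset.sum_Icc_succ_top (by omega : 1 ≤ m + 1),
            WB_succ u X c (m + 1)]
        linear_combination (-(q ^ m * WB u X c (m + 1))) * huq
      rw [key, ih, Finset.sum_range_succ (fun k => (q * X) ^ k) (m + 1)]
      ring

lemma WL_eq (q u X : K) (huq : q * u = 1) (c m : ℕ) : ∀ n : ℕ,
    WL q u X c m n = (∑ k ∈ range (m + n + 1), (q * X) ^ k) * (X ^ c * (1 - X)) := by
  intro n
  induction n with
  | zero => simpa using WL_base q u X huq c m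
  | succ n ih =>
      rw [WL_step q u X huq c m n, ih,
          show m + (n + 1) + 1 = (m + n + 1) + 1 from by omega,
          Finset.sum_range_succ (fun k => (q * X) ^ k) (m + n + 1)]
      ring

end WhittakerAux

/-- Closed form of the ramified `GL₃` Whittaker function at torus elements:
`I₁(m,n) + I₂(m,n) = q^{-2m-2n} (1-(qX)^{m+n+1})/(1-qX) ⋅ X^c (1-X)`. -/
theorem stmt2 {K : Type*} [Field K] (q X : K) (hq : q ≠ 0) (hqX : q * X ≠ 1)
    (c m n : ℕ) :
    I1 q X c m n + I2 q X c m n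
      = q⁻¹ ^ (2 * m + 2 * n) * ((1 - (q * X) ^ (m + n + 1)) / (1 - q * X))
          * (X ^ c * (1 - X)) := by
  have huq : q * q⁻¹ = 1 := mul_inv_cancel₀ hq
  have h3 : q⁻¹ ^ (m + n) * q ^ (m + n) = 1 := by
    rw [← mul_pow, inv_mul_cancel₀ hq, one_pow]
  have hbridge : I1 q X c m n + I2 q X c m n
      = q⁻¹ ^ (2 * m + 2 * n) * WL q q⁻¹ X c m n := by
    have h4 : (∑ i ∈ Icc 1 m, ∑ j ∈ Icc 1 n, q ^ (i + j) *
          ((1 - q⁻¹) * (∑ l ∈ Icc 1 (i + j - 1), X ^ (c + l)) + q⁻¹ * X ^ (c + i + j - 1)))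
        = ∑ i ∈ Icc 1 m, ∑ j ∈ Icc 1 n, q ^ (i + j) * WB q⁻¹ X c (i + j - 1) := by
      refine Finset.sum_congr rfl fun i hi => Finset.sum_congr rfl fun j hj => ?_
      have hi1 : 1 ≤ i := (Finset.mem_Icc.mp hi).1
      rw [show c + i + j - 1 = c + (i + j - 1) from by omega]
      simp only [WB]
    have h5 : (∑ i ∈ Icc 1 m, q ^ (i + n) *
          ((1 - q⁻¹) * (∑ l ∈ Icc 1 (i + n), X ^ (c + l)) + q⁻¹ * X ^ (c + i + n)))
        = ∑ i ∈ Icc 1 m, q ^ (i + n) * WB q⁻¹ X c (i + n) := by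
      refine Finset.sum_congr rfl fun i _ => ?_
      simp only [WB]; ring
    have h6 : (∑ i ∈ Icc 1 n, q ^ (i + m) *
          ((1 - q⁻¹) * (∑ l ∈ Icc 1 (i + m), X ^ (c + l)) + q⁻¹ * X ^ (c + i + m)))
        = ∑ i ∈ Icc 1 n, q ^ (i + m) * WB q⁻¹ X c (i + m) := by
      refine Finset.sum_congr rfl fun i _ => ?_
      simp only [WB]; ring
    have h7 : ((1 - q⁻¹) * (∑ l ∈ Icc 1 (m + n + 1), X ^ (c + l)) + q⁻¹ * X ^ (c + m + n + 1))
        = WB q⁻¹ X c (m + n + 1) := by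
      simp only [WB]; ring
    simp only [I1, I2, WL]
    rw [h4, h5, h6, h7]
    linear_combination (q⁻¹ ^ (m + n) * WB q⁻¹ X c (m + n + 1)) * h3
  rw [hbridge, WL_eq q q⁻¹ X huq c m n]
  have hgeo : (∑ k ∈ range (m + n + 1), (q * X) ^ k)
      = (1 - (q * X) ^ (m + n + 1)) / (1 - q * X) := by
    rw [geom_sum_eq hqX,
        div_eq_div_iff (sub_ne_zero.mpr hqX) (sub_ne_zero.mpr (Ne.symm hqX))]
    ring
  rw [hgeo]
  ring
end

section
/- Let $F$ be a nonarchimedean local field with ring of integers $\mathfrak{o}$ and maximal ideal $\mathfrak{p}$, let $n \ge 1$, let $B_3 \subset \mathrm{GL}_3(F)$ be the subgroup of upper triangular invertible matrices, and let $K_n$ be the group of matrices $g \in \mathrm{GL}_3(F)$ such that both $g$ and $g^{-1}$ have block shape $\begin{pmatrix} \mathfrak{o} & \mathfrak{o} & \mathfrak{p}^{-n}\\ \mathfrak{p}^n & 1+\mathfrak{p}^n & \mathfrak{o} \\ \mathfrak{p}^n & \mathfrak{p}^n & \mathfrak{o} \end{pmatrix}$. If $x \in F$ and the lower unitriangular matrix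 $\hat{\mathfrak{u}}(x,0,0)$ (with $x$ in position $(2,1)$) lies in $B_3 K_n$, then $x \in \mathfrak{p}^n$. Similarly, if $\hat{\mathfrak{u}}(0,y,0)$ (with $y$ in position $(3,2)$) lies in $B_3 K_n$, then $y \in \mathfrak{p}^n$. -/
open Matrix

/-- `x ∈ 𝔭^k` (for `k ∈ ℤ`, so negative powers are fractional ideals), where `𝔭 = ϖ𝔬`. -/
def pmem {F : Type*} [Field F] (O : Subring F) (ϖ : F) (k : ℤ) (x : F) : Prop :=
  ∃ y ∈ O, x = ϖ ^ k * y

/-- The congruence shape `(𝔬, 𝔬, 𝔭^{-n}; 𝔭^n, 1+𝔭^n, 𝔬; 𝔭^n, 𝔭^n, 𝔬)`. -/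
def Kshape {F : Type*} [Field F] (O : Subring F) (ϖ : F) (n : ℕ)
    (g : Matrix (Fin 3) (Fin 3) F) : Prop :=
  g 0 0 ∈ O ∧ g 0 1 ∈ O ∧ pmem O ϖ (-(n : ℤ)) (g 0 2) ∧
  pmem O ϖ (n : ℤ) (g 1 0) ∧ pmem O ϖ (n : ℤ) (g 1 1 - 1) ∧ g 1 2 ∈ O ∧
  pmem O ϖ (n : ℤ) (g 2 0) ∧ pmem O ϖ (n : ℤ) (g 2 1) ∧ g 2 2 ∈ O

/-- The congruence subgroup `K_n`: invertible matrices `g` such that `g` and `g⁻¹` both have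
the prescribed congruence shape. -/
def Kn {F : Type*} [Field F] (O : Subring F) (ϖ : F) (n : ℕ) :
    Set (Matrix (Fin 3) (Fin 3) F) :=
  {g | IsUnit g.det ∧ Kshape O ϖ n g ∧ Kshape O ϖ n g⁻¹}

/-- The upper triangular Borel subgroup `B₃` of `GL₃(F)`. -/
def B3 (F : Type*) [Field F] : Set (Matrix (Fin 3) (Fin 3) F) :=
  {b | IsUnit b.det ∧ b 1 0 = 0 ∧ b 2 0 = 0 ∧ b 2 1 = 0}

lemma aux_unit {F : Type*} [Field F] (O : Subring F) (ϖ : F) (n : ℕ) (hn : 1 ≤ n)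
    (hϖO : ϖ ∈ O) (hϖ0 : ϖ ≠ 0) (hϖnu : ϖ⁻¹ ∉ O)
    (hmax : ∀ x ∈ O, x⁻¹ ∉ O → ∃ y ∈ O, x = ϖ * y)
    (u v : F) (hv : v ∈ O) (hu : u = 1 + ϖ ^ n * v) : u ≠ 0 ∧ u⁻¹ ∈ O := by
  obtain ⟨m, rfl⟩ : ∃ m, n = m + 1 := ⟨n - 1, (Nat.succ_pred_eq_of_pos hn).symm⟩
  constructor
  · intro h0
    apply hϖnu
    have h2 : (0:F) = 1 + ϖ ^ (m+1) * v := h0 ▸ hu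
    have h1 : ϖ * (-(ϖ ^ m * v)) = 1 := by linear_combination h2
    rw [inv_eq_of_mul_eq_one_right h1]
    exact neg_mem (mul_mem (pow_mem hϖO m) hv)
  · have huO : u ∈ O := hu ▸ add_mem (one_mem O) (mul_mem (pow_mem hϖO (m+1)) hv)
    by_contra hc
    obtain ⟨t, ht, hut⟩ := hmax u huO hc
    apply hϖnu
    have h2 : ϖ * t = 1 + ϖ ^ (m+1) * v := hut ▸ hu
    have h1 : ϖ * (t - ϖ ^ m * v) = 1 := by linear_combination h2
    rw [inv_eq_of_mul_eq_one_right h1]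
    exact sub_mem ht (mul_mem (pow_mem hϖO m) hv)

/-- If a lower unitriangular matrix `û(x,0,0)` (resp. `û(0,y,0)`) lies in `B₃ K_n`, then
`x ∈ 𝔭^n` (resp. `y ∈ 𝔭^n`). -/
theorem stmt7 {F : Type*} [Field F] (O : Subring F) (ϖ : F) (n : ℕ) (hn : 1 ≤ n)
    (hϖO : ϖ ∈ O) (hϖ0 : ϖ ≠ 0) (hϖnu : ϖ⁻¹ ∉ O)
    (hval : ∀ x : F, x ∈ O ∨ x⁻¹ ∈ O)
    (hmax : ∀ x ∈ O, x⁻¹ ∉ O → ∃ y ∈ O, x = ϖ * y) :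
    (∀ x : F,
      (∃ b ∈ B3 F, ∃ k ∈ Kn O ϖ n, !![(1 : F), 0, 0; x, 1, 0; 0, 0, 1] = b * k) →
        pmem O ϖ (n : ℤ) x) ∧
    (∀ y : F,
      (∃ b ∈ B3 F, ∃ k ∈ Kn O ϖ n, !![(1 : F), 0, 0; 0, 1, 0; 0, y, 1] = b * k) →
        pmem O ϖ (n : ℤ) y) := by
  constructor
  · rintro x ⟨b, ⟨hbdet, hb10, hb20, hb21⟩, k, ⟨hkdet, hk, hki⟩, heq⟩
    obtain ⟨_, _, _, ⟨a, ha, hk10⟩, ⟨c, hc, hk11⟩, _, hk20, hk21, _⟩ := hk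
    rw [zpow_natCast] at hk10 hk11
    have e20 : (0:F) = b 2 2 * k 2 0 := by
      have := congrFun (congrFun heq 2) 0
      simpa [Matrix.mul_apply, Fin.sum_univ_three, Matrix.vecHead, Matrix.vecTail,
        hb20, hb21] using this
    have e21 : (0:F) = b 2 2 * k 2 1 := by
      have := congrFun (congrFun heq 2) 1
      simpa [Matrix.mul_apply, Fin.sum_univ_three, Matrix.vecHead, Matrix.vecTail,
        hb20, hb21] using this
    have hb22 : b 2 2 ≠ 0 := by
      intro h
      have : b.det = 0 := by rw [Matrix.det_fin_three, hb10, hb20, hb21, h]; ring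
      exact (isUnit_iff_ne_zero.mp hbdet) this
    have hk20 : k 2 0 = 0 := by
      rcases mul_eq_zero.mp e20.symm with h | h
      · exact absurd h hb22
      · exact h
    have hk21' : k 2 1 = 0 := by
      rcases mul_eq_zero.mp e21.symm with h | h
      · exact absurd h hb22
      · exact h
    have e11 : (1:F) = b 1 1 * k 1 1 := by
      have := congrFun (congrFun heq 1) 1
      simpa [Matrix.mul_apply, Fin.sum_univ_three, Matrix.vecHead, Matrix.vecTail,
        hb10, hk21'] using this
    have e10 : x = b 1 1 * k 1 0 := by
      have := congrFun (congrFun heq 1) 0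
      simpa [Matrix.mul_apply, Fin.sum_univ_three, Matrix.vecHead, Matrix.vecTail,
        hb10, hk20] using this
    have hk11' : k 1 1 = 1 + ϖ ^ n * c := by linear_combination hk11
    obtain ⟨hne, hinv⟩ := aux_unit O ϖ n hn hϖO hϖ0 hϖnu hmax _ c hc hk11'
    have hb11 : b 1 1 = (k 1 1)⁻¹ := eq_inv_of_mul_eq_one_left e11.symm
    refine ⟨a * (k 1 1)⁻¹, mul_mem ha hinv, ?_⟩
    rw [e10, hb11, hk10, zpow_natCast]
    ring
  · rintro y ⟨b, ⟨hbdet, hb10, hb20, hb21⟩, k, ⟨hkdet, hk, hki⟩, heq⟩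
    obtain ⟨_, _, _, _, _, _, ⟨a0, ha0, hk20⟩, ⟨c, hc, hk21⟩, hk22O⟩ := hk
    rw [zpow_natCast] at hk20 hk21
    have hb22 : b 2 2 ≠ 0 := by
      intro h
      have : b.det = 0 := by rw [Matrix.det_fin_three, hb10, hb20, hb21, h]; ring
      exact (isUnit_iff_ne_zero.mp hbdet) this
    have e20 : (0:F) = b 2 2 * k 2 0 := by
      have := congrFun (congrFun heq 2) 0
      simpa [Matrix.mul_apply, Fin.sum_univ_three, Matrix.vecHead, Matrix.vecTail,
        hb20, hb21] using this
    have hk20' : k 2 0 = 0 := by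
      rcases mul_eq_zero.mp e20.symm with h | h
      · exact absurd h hb22
      · exact h
    have e21 : y = b 2 2 * k 2 1 := by
      have := congrFun (congrFun heq 2) 1
      simpa [Matrix.mul_apply, Fin.sum_univ_three, Matrix.vecHead, Matrix.vecTail,
        hb20, hb21] using this
    have e22 : (1:F) = b 2 2 * k 2 2 := by
      have := congrFun (congrFun heq 2) 2
      simpa [Matrix.mul_apply, Fin.sum_univ_three, Matrix.vecHead, Matrix.vecTail,
        hb20, hb21] using this
    have hkk : k * k⁻¹ = 1 := Matrix.mul_nonsing_inv k hkdet
    obtain ⟨_, _, _, _, _, hh12, _, _, hh22⟩ := hki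
    have e' : k 2 0 * k⁻¹ 0 2 + k 2 1 * k⁻¹ 1 2 + k 2 2 * k⁻¹ 2 2 = 1 := by
      have := congrFun (congrFun hkk 2) 2
      simpa [Matrix.mul_apply, Fin.sum_univ_three, Matrix.one_apply] using this
    have hu : k 2 2 * k⁻¹ 2 2 = 1 + ϖ ^ n * (-(c * k⁻¹ 1 2)) := by
      rw [hk20', hk21] at e'
      linear_combination e'
    obtain ⟨hne, hinv⟩ := aux_unit O ϖ n hn hϖO hϖ0 hϖnu hmax _ _
      (neg_mem (mul_mem hc hh12)) hu
    have hk22ne : k 2 2 ≠ 0 := fun h => hne (by rw [h]; ring)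
    have hb22v : b 2 2 = (k 2 2)⁻¹ := eq_inv_of_mul_eq_one_left e22.symm
    have h22inv : (k 2 2)⁻¹ = k⁻¹ 2 2 * (k 2 2 * k⁻¹ 2 2)⁻¹ :=
      inv_eq_of_mul_eq_one_right (by rw [← mul_assoc]; exact mul_inv_cancel₀ hne)
    refine ⟨c * (k⁻¹ 2 2 * (k 2 2 * k⁻¹ 2 2)⁻¹), mul_mem hc (mul_mem hh22 hinv), ?_⟩
    rw [e21, hb22v, hk21, h22inv, zpow_natCast]
    ring
end
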